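/- Let F be a field, let G and H be groups, and let φ : FG → FH be a non-zero graded homomorphism between the group algebras with their standard gradings. Then φ(u_g) ≠ 0 for all g ∈ G (so φ is graded injective), and there exist a group homomorphism ψ : G → H and a group homomorphism α : G → F^× such that φ(u_g) = α(g)·u_{ψ(g)} for all g ∈ G. -/

import Mathlib

set_option autoImplicit false

universe u

/-- The homogeneous component `F·u_g` of the standard grading of a group algebra. -/
noncomputable def stdComp (F : Type u) [Field F] {G : Type u} [Group G] (g : G) :
    Submodule F (MonoidAlgebra F G) :=
  Submodule.span F {MonoidAlgebra.single g 1}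

/-- Every non-zero graded homomorphism `φ : FG → FH` between group algebras (with their
standard gradings) satisfies `φ(u_g) ≠ 0` for all `g ∈ G` (hence is graded injective),
and is given by `φ(u_g) = α(g)·u_{ψ(g)}` for a group homomorphism `ψ : G → H` and a
group homomorphism `α : G → F^×`. -/
theorem nonzero_graded_hom_of_group_algebras (F : Type u) [Field F]
    (G H : Type u) [Group G] [Group H]
    (φ : MonoidAlgebra F G →ₙₐ[F] MonoidAlgebra F H)
    (hgraded : ∀ g : G, ∃ h : H, ∀ a ∈ stdComp F g, φ a ∈ stdComp F h)
    (hnonzero : ∃ x : MonoidAlgebra F G, φ x ≠ 0) :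
    (∀ g : G, φ (MonoidAlgebra.single g 1) ≠ 0) ∧
    (∀ g : G, Set.InjOn φ (stdComp F g)) ∧
    ∃ (ψ : G →* H) (α : G →* Fˣ), ∀ g : G,
      φ (MonoidAlgebra.single g 1) = (α g : F) • MonoidAlgebra.single (ψ g) 1 := by
  classical
  have key : ∀ g : G, ∃ h : H, ∃ a : F,
      φ (MonoidAlgebra.single g 1) = MonoidAlgebra.single h a := by
    intro g
    obtain ⟨h, hh⟩ := hgraded g
    have hmem : φ (MonoidAlgebra.single g 1) ∈ stdComp F h :=
      hh _ (Submodule.mem_span_singleton_self _)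
    rw [stdComp, Submodule.mem_span_singleton] at hmem
    obtain ⟨a, ha⟩ := hmem
    exact ⟨h, a, by rw [← ha, MonoidAlgebra.smul_single', mul_one]⟩
  choose ψ0 α0 hφ using key
  -- some coefficient is nonzero
  have hex : ∃ g : G, α0 g ≠ 0 := by
    by_contra hc
    push_neg at hc
    obtain ⟨x, hx⟩ := hnonzero
    apply hx
    have hsingle : ∀ g : G, φ (MonoidAlgebra.single g 1) = 0 := by
      intro g
      rw [hφ g, hc g, MonoidAlgebra.single_zero]
    calc φ x = φ (x.coeff.sum fun g a => a • MonoidAlgebra.single g 1) := by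
            congr 1
            conv_lhs => rw [← MonoidAlgebra.sum_coeff_single x]
            exact Finsupp.sum_congr fun g _ => by
              rw [MonoidAlgebra.smul_single', mul_one]
      _ = x.coeff.sum fun g a => a • φ (MonoidAlgebra.single g 1) := by
            rw [map_finsuppSum]
            exact Finsupp.sum_congr fun g _ => map_smul φ _ _
      _ = 0 := Finset.sum_eq_zero fun g _ => by simp [hsingle g]
  -- all coefficients are nonzero
  have hn : ∀ g : G, α0 g ≠ 0 := by
    obtain ⟨g0, hg0⟩ := hex
    intro g hg
    apply hg0
    have e1 : (MonoidAlgebra.single g0 (1 : F)) =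
        MonoidAlgebra.single (g0 * g⁻¹) 1 * MonoidAlgebra.single g 1 := by
      rw [MonoidAlgebra.single_mul_single, mul_one, inv_mul_cancel_right]
    have e2 := congrArg φ e1
    rw [map_mul, hφ, hφ, hφ, MonoidAlgebra.single_mul_single, hg, mul_zero,
      MonoidAlgebra.single_zero] at e2
    exact MonoidAlgebra.single_eq_zero.mp e2
  -- multiplicativity
  have hmul : ∀ g g' : G, ψ0 (g * g') = ψ0 g * ψ0 g' ∧ α0 (g * g') = α0 g * α0 g' := by
    intro g g'
    have e1 : (MonoidAlgebra.single (g * g') (1 : F)) =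
        MonoidAlgebra.single g 1 * MonoidAlgebra.single g' 1 := by
      rw [MonoidAlgebra.single_mul_single, mul_one]
    have e2 := congrArg φ e1
    rw [map_mul, hφ, hφ, hφ, MonoidAlgebra.single_mul_single] at e2
    rcases MonoidAlgebra.single_inj.mp e2 with ⟨h1, h2⟩ | ⟨h1, _⟩
    · exact ⟨h1, h2⟩
    · exact absurd h1 (hn _)
  have hne : ∀ g : G, φ (MonoidAlgebra.single g 1) ≠ 0 := by
    intro g
    rw [hφ g]
    exact fun h => hn g (MonoidAlgebra.single_eq_zero.mp h)
  refine ⟨hne, ?_, ?_⟩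
  · intro g x hx y hy hxy
    rw [SetLike.mem_coe, stdComp, Submodule.mem_span_singleton] at hx hy
    obtain ⟨a, rfl⟩ := hx
    obtain ⟨b, rfl⟩ := hy
    rw [map_smul, map_smul] at hxy
    have hab : a = b := by
      have : (a - b) • φ (MonoidAlgebra.single g 1) = 0 := by
        rw [sub_smul, hxy, sub_self]
      rcases smul_eq_zero.mp this with h | h
      · exact sub_eq_zero.mp h
      · exact absurd h (hne g)
    rw [hab]
  · refine ⟨MonoidHom.mk' ψ0 fun a b => (hmul a b).1,
      MonoidHom.mk' (fun g => Units.mk0 (α0 g) (hn g)) fun a b => Units.ext ?_, fun g => ?_⟩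
    · simp [(hmul a b).2]
    · rw [hφ g, MonoidAlgebra.smul_single', mul_one]
      rfl
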